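/- For a mixture of singlet states ρ = Σ_{λ,a,b} q_{λab} |λ;a,b⟩⟨λ;a,b| with q_{λab} ≥ 0 summing to 1, the trace norm of the partial transpose equals ‖ρ^{T_A}‖₁ = Σ_{λ,a,b} q_{λab} d_λ, and hence the logarithmic negativity is E^N(ρ) = log(Σ_λ p_λ d_λ) where p_λ = Σ_{a,b} q_{λab}. -/

import Mathlib

open Finset
open scoped ComplexOrder

noncomputable section

/-- Outer product `|v⟩⟨v|` as a matrix. -/
def outer {I : Type*} (v : I → ℂ) : Matrix I I ℂ := fun i j => v i * star (v j)

/-- Reduced density matrix on subsystem `A` of a bipartite pure state. -/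
def redA {IA IB : Type*} [Fintype IB] (ψ : IA × IB → ℂ) : Matrix IA IA ℂ :=
  fun i i' => ∑ j : IB, ψ (i, j) * star (ψ (i', j))

lemma redA_isHermitian {IA IB : Type*} [Fintype IB] (ψ : IA × IB → ℂ) :
    (redA ψ).IsHermitian := by
  unfold Matrix.IsHermitian
  ext i i'
  simp only [Matrix.conjTranspose_apply, redA, star_sum, star_mul', star_star]
  exact Finset.sum_congr rfl fun j _ => mul_comm _ _

/-- Von Neumann entropy `-Tr(ρ log ρ)` computed via eigenvalues
(with the convention `0 log 0 = 0`, automatic since `Real.log 0 = 0`). -/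
def vNEntropy {I : Type*} [Fintype I] [DecidableEq I] (M : Matrix I I ℂ)
    (h : M.IsHermitian) : ℝ :=
  -∑ i, h.eigenvalues i * Real.log (h.eigenvalues i)

/-- Bipartite entanglement entropy of a pure state: `S(Tr_B |ψ⟩⟨ψ|)`. -/
def entEntropy {IA IB : Type*} [Fintype IA] [Fintype IB] [DecidableEq IA]
    (ψ : IA × IB → ℂ) : ℝ :=
  vNEntropy (redA ψ) (redA_isHermitian ψ)

/-- Partial transpose with respect to subsystem `A`. -/
def ptA {IA IB : Type*} (X : Matrix (IA × IB) (IA × IB) ℂ) :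
    Matrix (IA × IB) (IA × IB) ℂ :=
  fun p p' => X (p'.1, p.2) (p.1, p'.2)

/-- Absolute value `|X| = √(XᴴX)` of a matrix. -/
def matAbs {I : Type*} [Fintype I] [DecidableEq I] (X : Matrix I I ℂ) : Matrix I I ℂ :=
  (Matrix.posSemidef_conjTranspose_mul_self X).1.eigenvectorUnitary.1 *
    Matrix.diagonal ((↑) ∘ (Real.sqrt ·) ∘ (Matrix.posSemidef_conjTranspose_mul_self X).1.eigenvalues) *
    (star (Matrix.posSemidef_conjTranspose_mul_self X).1.eigenvectorUnitary : Matrix I I ℂ)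

/-- Trace norm `‖X‖₁ = Tr √(XᴴX)`. -/
def traceNorm {I : Type*} [Fintype I] [DecidableEq I] (X : Matrix I I ℂ) : ℝ :=
  (matAbs X).trace.re

open Matrix


section AuxOuter2

variable {P : Type*} [Fintype P] [DecidableEq P]

/-- `|v⟩⟨w|` as a matrix. -/
def outer2 (v w : P → ℂ) : Matrix P P ℂ := fun p p' => v p * star (w p')

lemma outer2_mul (v w x y : P → ℂ) :
    outer2 v w * outer2 x y = (∑ p, star (w p) * x p) • outer2 v y := by
  ext p p'
  simp only [Matrix.mul_apply, outer2, Matrix.smul_apply, smul_eq_mul]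
  rw [Finset.sum_mul]
  exact Finset.sum_congr rfl fun r _ => by ring

lemma outer2_conjT (v w : P → ℂ) : (outer2 v w)ᴴ = outer2 w v := by
  ext p p'
  simp [outer2, Matrix.conjTranspose_apply, mul_comm]

lemma trace_outer2 (v w : P → ℂ) : (outer2 v w).trace = ∑ p, star (w p) * v p := by
  simp [Matrix.trace, Matrix.diag, outer2, mul_comm]

lemma quad_outer2 (v x : P → ℂ) :
    star x ⬝ᵥ ((outer2 v v) *ᵥ x) =
      star (∑ p, star (v p) * x p) * (∑ p, star (v p) * x p) := by
  have hst : star (∑ p, star (v p) * x p) = ∑ p, v p * star (x p) := by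
    simp [star_sum, star_mul', star_star]
  rw [hst, Finset.sum_mul_sum]
  simp only [dotProduct, Matrix.mulVec, outer2, Finset.mul_sum, Pi.star_apply]
  exact Finset.sum_congr rfl fun p _ => Finset.sum_congr rfl fun i _ => by ring

variable {K : Type*} [Fintype K] [DecidableEq K]
variable (v : K → P → ℂ)

lemma fam_mul (hon : ∀ k k', ∑ p, star (v k p) * v k' p = if k = k' then 1 else 0)
    (c c' : K → ℂ) (f g τ : K → K) (hτ : Function.Injective τ) :
    (∑ k, c k • outer2 (v (f k)) (v (τ k))) * (∑ k, c' k • outer2 (v (τ k)) (v (g k)))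
      = ∑ k, (c k * c' k) • outer2 (v (f k)) (v (g k)) := by
  rw [Finset.sum_mul_sum]
  refine Finset.sum_congr rfl fun k _ => ?_
  rw [Finset.sum_eq_single k]
  · rw [smul_mul_smul_comm, outer2_mul, hon, if_pos rfl, one_smul]
  · intro k' _ hk'
    rw [smul_mul_smul_comm, outer2_mul, hon, if_neg (fun h => hk' (hτ h).symm), zero_smul,
      smul_zero]
  · intro h; exact absurd (Finset.mem_univ k) h

lemma fam_conjT (c : K → ℂ) (f g : K → K) :
    (∑ k, c k • outer2 (v (f k)) (v (g k)))ᴴ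
      = ∑ k, star (c k) • outer2 (v (g k)) (v (f k)) := by
  rw [Matrix.conjTranspose_sum]
  exact Finset.sum_congr rfl fun k _ => by
    rw [Matrix.conjTranspose_smul, outer2_conjT]

lemma fam_trace (hon : ∀ k k', ∑ p, star (v k p) * v k' p = if k = k' then 1 else 0)
    (c : K → ℂ) :
    (∑ k, c k • outer2 (v k) (v k)).trace = ∑ k, c k := by
  rw [Matrix.trace_sum]
  refine Finset.sum_congr rfl fun k _ => ?_
  rw [Matrix.trace_smul, trace_outer2, hon, if_pos rfl, smul_eq_mul, mul_one]

lemma psd_single (x : P → ℂ) (r : ℝ) (hr : 0 ≤ r) :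
    Matrix.PosSemidef (((r : ℝ) : ℂ) • outer2 x x) := by
  refine Matrix.posSemidef_iff_dotProduct_mulVec.mpr ⟨?_, ?_⟩
  · unfold Matrix.IsHermitian
    rw [Matrix.conjTranspose_smul, outer2_conjT]
    simp [Complex.star_def, Complex.conj_ofReal]
  · intro y
    rw [Matrix.smul_mulVec, dotProduct_smul, quad_outer2]
    rw [smul_eq_mul]
    exact mul_nonneg (Complex.zero_le_real.mpr hr) (star_mul_self_nonneg _)

lemma fam_psd (r : K → ℝ) (hr : ∀ k, 0 ≤ r k) :
    Matrix.PosSemidef (∑ k, ((r k : ℝ) : ℂ) • outer2 (v k) (v k)) := by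
  refine Finset.sum_induction _ _ (fun a b ha hb => ha.add hb) ?_
    (fun k _ => psd_single (v k) (r k) (hr k))
  exact Matrix.PosSemidef.zero

end AuxOuter2

/-- the trace norm of the partial transpose of a singlet mixture is
`Σ q_{λab} d_λ`, hence the logarithmic negativity is `log (Σ_λ p_λ d_λ)` with
`p_λ = Σ_{a,b} q_{λab}`. -/
theorem logNegativity_of_singlet_mixture
    {IA IB : Type*} [Fintype IA] [Fintype IB] [DecidableEq IA] [DecidableEq IB]
    {Λ α β : Type*} [Fintype Λ] [Fintype α] [Fintype β]
    [DecidableEq Λ] [DecidableEq α] [DecidableEq β]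
    (d : Λ → ℕ) (hd : ∀ l, 1 ≤ d l)
    (u : Λ → ℕ → α → IA → ℂ) (w : Λ → ℕ → β → IB → ℂ) (η : Λ → ℕ → ℂ)
    (hu : ∀ l m a l' m' a', m < d l → m' < d l' →
      ∑ i : IA, star (u l m a i) * u l' m' a' i =
        if (l, m, a) = (l', m', a') then 1 else 0)
    (hw : ∀ l m b l' m' b', m < d l → m' < d l' →
      ∑ j : IB, star (w l m b j) * w l' m' b' j =
        if (l, m, b) = (l', m', b') then 1 else 0)
    (hη : ∀ l m, m < d l → ‖η l m‖ = 1)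
    (singlet : Λ → α → β → IA × IB → ℂ)
    (hs : singlet = fun l a b p => ((Real.sqrt (d l) : ℂ))⁻¹ *
      ∑ m ∈ Finset.range (d l), η l m * u l m a p.1 * w l m b p.2)
    (q : Λ → α → β → ℝ) (hq : ∀ l a b, 0 ≤ q l a b)
    (hq1 : ∑ l : Λ, ∑ a : α, ∑ b : β, q l a b = 1)
    (ρ : Matrix (IA × IB) (IA × IB) ℂ)
    (hρ : ρ = ∑ l : Λ, ∑ a : α, ∑ b : β, (q l a b : ℂ) • outer (singlet l a b)) :
    traceNorm (ptA ρ) = ∑ l : Λ, ∑ a : α, ∑ b : β, q l a b * d l ∧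
    Real.log (traceNorm (ptA ρ)) =
      Real.log (∑ l : Λ, (∑ a : α, ∑ b : β, q l a b) * d l) := by
  classical
  have key : traceNorm (ptA ρ) = ∑ l : Λ, ∑ a : α, ∑ b : β, q l a b * d l := by
    subst hs hρ
    -- the orthonormal family indexed by a sigma type
    set v : (Σ l : Λ, α × β × (Fin (d l) × Fin (d l))) → (IA × IB) → ℂ :=
      fun k p => star (u k.1 k.2.2.2.1 k.2.1 p.1) * w k.1 k.2.2.2.2 k.2.2.1 p.2 with hv
    have hon : ∀ k k', ∑ p : IA × IB, star (v k p) * v k' p = if k = k' then 1 else 0 := by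
      rintro ⟨l, a, b, m, m'⟩ ⟨l', a', b', n, n'⟩
      simp only [hv]
      rw [Fintype.sum_prod_type]
      have hsplit : ∑ i : IA, ∑ j : IB,
          star (star (u l ↑m a i) * w l ↑m' b j) * (star (u l' ↑n a' i) * w l' ↑n' b' j)
          = (∑ i : IA, star (u l' ↑n a' i) * u l ↑m a i) *
            (∑ j : IB, star (w l ↑m' b j) * w l' ↑n' b' j) := by
        rw [Finset.sum_mul_sum]
        exact Finset.sum_congr rfl fun i _ => Finset.sum_congr rfl fun j _ => by
          simp only [star_mul', star_star]; ring
      rw [hsplit, hu l' ↑n a' l ↑m a n.isLt m.isLt, hw l ↑m' b l' ↑n' b' m'.isLt n'.isLt]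
      by_cases hk : (⟨l, (a, b, (m, m'))⟩ : Σ l : Λ, α × β × (Fin (d l) × Fin (d l)))
          = ⟨l', (a', b', (n, n'))⟩
      · obtain ⟨h1, hk2⟩ := Sigma.ext_iff.mp hk
        dsimp only at h1 hk2
        subst h1
        have hk3 := eq_of_heq hk2
        simp only [Prod.mk.injEq] at hk3
        obtain ⟨rfl, rfl, rfl, rfl⟩ := hk3
        simp
      · rw [if_neg hk]
        rcases eq_or_ne ((l', (↑n : ℕ), a') : Λ × ℕ × α) (l, ↑m, a) with h1 | h1
        · rcases eq_or_ne ((l, (↑m' : ℕ), b) : Λ × ℕ × β) (l', ↑n', b') with h2 | h2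
          · exfalso
            apply hk
            simp only [Prod.mk.injEq] at h1 h2
            obtain ⟨rfl, hnm, rfl⟩ := h1
            obtain ⟨-, hmn', rfl⟩ := h2
            have h4 : n = m := Fin.ext hnm
            have h5 : m' = n' := Fin.ext hmn'
            subst h4; subst h5
            rfl
          · rw [if_neg h2, mul_zero]
        · rw [if_neg h1, zero_mul]
    -- the coefficient function and the index swap
    set σf : (Σ l : Λ, α × β × (Fin (d l) × Fin (d l))) → (Σ l : Λ, α × β × (Fin (d l) × Fin (d l))) :=
      fun k => ⟨k.1, (k.2.1, k.2.2.1, (k.2.2.2.2, k.2.2.2.1))⟩ with hσdef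
    have hσ : Function.Injective σf := Function.Involutive.injective (fun k => rfl)
    set c : (Σ l : Λ, α × β × (Fin (d l) × Fin (d l))) → ℂ :=
      fun k => ((q k.1 k.2.1 k.2.2.1 / (d k.1 : ℝ) : ℝ) : ℂ) *
        (η k.1 k.2.2.2.1 * star (η k.1 k.2.2.2.2)) with hcdef
    set r : (Σ l : Λ, α × β × (Fin (d l) × Fin (d l))) → ℝ :=
      fun k => q k.1 k.2.1 k.2.2.1 / (d k.1 : ℝ) with hrdef
    -- the partial transpose as a single sum
    have hM : ptA (∑ l : Λ, ∑ a : α, ∑ b : β, (q l a b : ℂ) •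
          outer ((fun l a b (p : IA × IB) => ((Real.sqrt (d l) : ℂ))⁻¹ *
            ∑ m ∈ Finset.range (d l), η l m * u l m a p.1 * w l m b p.2) l a b))
        = ∑ k, c k • outer2 (v (σf k)) (v k) := by
      ext ⟨i, j⟩ ⟨i', j'⟩
      simp only [← Finset.univ_sigma_univ, Finset.sum_sigma, Fintype.sum_prod_type,
        Matrix.sum_apply, Matrix.smul_apply, smul_eq_mul, outer, outer2, ptA,
        ← Fin.sum_univ_eq_sum_range]
      refine Finset.sum_congr rfl fun l _ => Finset.sum_congr rfl fun a _ =>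
        Finset.sum_congr rfl fun b _ => ?_
      have hstarC : star ((Real.sqrt (d l) : ℂ))⁻¹ = ((Real.sqrt (d l) : ℂ))⁻¹ := by
        rw [star_inv₀, Complex.star_def, Complex.conj_ofReal]
      have hqd : ((q l a b / (d l : ℝ) : ℝ) : ℂ)
          = (q l a b : ℂ) * (((Real.sqrt (d l) : ℂ))⁻¹ * ((Real.sqrt (d l) : ℂ))⁻¹) := by
        rw [← mul_inv, ← Complex.ofReal_mul, Real.mul_self_sqrt (Nat.cast_nonneg _),
          Complex.ofReal_div, div_eq_mul_inv]
      simp only [hcdef, hσdef, hv, hqd]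
      rw [star_mul', hstarC, star_sum]
      simp only [Finset.mul_sum, Finset.sum_mul]
      rw [Finset.sum_comm]
      refine Finset.sum_congr rfl fun m _ => Finset.sum_congr rfl fun m' _ => ?_
      simp only [star_mul', star_star]
      ring
    rw [hM]
    -- the absolute value of the partial transpose
    have hr0 : ∀ k, 0 ≤ r k := fun k => div_nonneg (hq _ _ _) (Nat.cast_nonneg _)
    have hSpsd := fam_psd v r hr0
    have hcc : ∀ k, star (c k) * c k = ((r k : ℝ) : ℂ) * ((r k : ℝ) : ℂ) := by
      rintro ⟨l, a, b, m, m'⟩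
      have hne : ∀ (mm : Fin (d l)), star (η l ↑mm) * η l ↑mm = 1 := by
        intro mm
        rw [Complex.star_def, mul_comm, Complex.mul_conj, Complex.normSq_eq_norm_sq,
          hη l ↑mm mm.isLt]
        norm_num
      have h1 : star (c ⟨l, (a, b, (m, m'))⟩) * c ⟨l, (a, b, (m, m'))⟩
          = (((r ⟨l, (a, b, (m, m'))⟩ : ℝ) : ℂ) * ((r ⟨l, (a, b, (m, m'))⟩ : ℝ) : ℂ)) *
            ((star (η l ↑m) * η l ↑m) * ((star (η l ↑m') * η l ↑m'))) := by
        simp only [hcdef, hrdef, star_mul', star_star, Complex.star_def, Complex.conj_conj, Complex.conj_ofReal]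
        ring
      rw [h1, hne, hne, one_mul, mul_one]
    have hSsq : (∑ k, ((r k : ℝ) : ℂ) • outer2 (v k) (v k)) ^ 2
        = (∑ k, c k • outer2 (v (σf k)) (v k))ᴴ * (∑ k, c k • outer2 (v (σf k)) (v k)) := by
      have h2 := fam_conjT v c σf id
      simp only [id_eq] at h2
      rw [pow_two, h2]
      have h3 := fam_mul v hon (fun k => star (c k)) c id id σf hσ
      simp only [id_eq] at h3
      have h1 := fam_mul v hon (fun k => ((r k : ℝ) : ℂ)) (fun k => ((r k : ℝ) : ℂ))
        id id id Function.injective_id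
      simp only [id_eq] at h1
      rw [h3, h1]
      exact Finset.sum_congr rfl fun k _ => by rw [hcc k]
    have habs : matAbs (∑ k, c k • outer2 (v (σf k)) (v k))
        = ∑ k, ((r k : ℝ) : ℂ) • outer2 (v k) (v k) := by
      unfold matAbs
      open scoped MatrixOrder in
      have hH := (Matrix.posSemidef_conjTranspose_mul_self (∑ k, c k • outer2 (v (σf k)) (v k))).1
      open scoped MatrixOrder in
      have e1 := hH.cfc_eq Real.sqrt
      rw [Matrix.IsHermitian.cfc, Unitary.conjStarAlgAut_apply] at e1
      refine Eq.trans e1.symm ?_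
      open scoped MatrixOrder in
      have e2 : cfc Real.sqrt ((∑ k, c k • outer2 (v (σf k)) (v k))ᴴ * (∑ k, c k • outer2 (v (σf k)) (v k)))
          = CFC.sqrt ((∑ k, c k • outer2 (v (σf k)) (v k))ᴴ * (∑ k, c k • outer2 (v (σf k)) (v k))) := by
        rw [CFC.sqrt_eq_cfc, cfc_nnreal_eq_real _ _
          (Matrix.nonneg_iff_posSemidef.mpr (Matrix.posSemidef_conjTranspose_mul_self _))]
        refine cfc_congr fun x _ => ?_
        simp [Real.coe_sqrt, Real.coe_toNNReal', Real.sqrt_eq_zero']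
        rcases le_total 0 x with h | h
        · rw [max_eq_left h]
        · rw [max_eq_right h, Real.sqrt_zero, Real.sqrt_eq_zero'.mpr h]
      open scoped MatrixOrder in
      rw [e2, ← hSsq]
      open scoped MatrixOrder in
      exact CFC.sqrt_sq _ (Matrix.nonneg_iff_posSemidef.mpr hSpsd)
    unfold traceNorm
    rw [habs, fam_trace v hon]
    have hre : (∑ k, ((r k : ℝ) : ℂ)).re = ∑ k, r k := by
      rw [← Complex.ofReal_sum, Complex.ofReal_re]
    rw [hre]
    -- evaluate the sum over the sigma type
    rw [← Finset.univ_sigma_univ, Finset.sum_sigma]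
    refine Finset.sum_congr rfl fun l _ => ?_
    rw [Fintype.sum_prod_type]
    refine Finset.sum_congr rfl fun a _ => ?_
    rw [Fintype.sum_prod_type]
    refine Finset.sum_congr rfl fun b _ => ?_
    rw [Fintype.sum_prod_type]
    simp only [hrdef, Finset.sum_const, Finset.card_univ, Fintype.card_fin, nsmul_eq_mul]
    have hdne : (d l : ℝ) ≠ 0 := Nat.cast_ne_zero.mpr (Nat.one_le_iff_ne_zero.mp (hd l))
    field_simp

  refine ⟨key, ?_⟩
  rw [key]
  congr 1
  refine Finset.sum_congr rfl fun l _ => ?_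
  rw [Finset.sum_mul]
  exact Finset.sum_congr rfl fun a _ => (Finset.sum_mul _ _ _).symm
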